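/- Let P be the group with presentation ⟨a, b, c, t ∣ b² = 1, c² = 1, a⁻¹ b a = c, t a t b t⁻¹ c = 1⟩. Then the elements t b t⁻¹ and a⁻¹ t⁻¹ are both nontrivial in P; indeed there is a homomorphism from P to the isometry group of the Euclidean plane sending a, b, c to the reflection across a line ℓ₁ and t to the reflection across a line ℓ₂ meeting ℓ₁ at angle π/3, under which a⁻¹ t⁻¹ maps to a rotation of order 3 and t b t⁻¹ maps to a reflection. -/

import Mathlib

/-!
Statement 8: the group `P = ⟨a, b, c, t ∣ b² = 1, c² = 1, a⁻¹ba = c, tatbt⁻¹c = 1⟩`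
acts as a reflection group on the Euclidean plane, and the elements `t b t⁻¹` and
`a⁻¹ t⁻¹` are nontrivial in `P`.
-/

/-- The generators `a, b, c, t`. -/
inductive PGen | a | b | c | t

/-- The relators `b²`, `c²`, `a⁻¹ b a c⁻¹`, `t a t b t⁻¹ c`. -/
def PRels : Set (FreeGroup PGen) :=
  {FreeGroup.of PGen.b ^ 2,
   FreeGroup.of PGen.c ^ 2,
   (FreeGroup.of PGen.a)⁻¹ * FreeGroup.of PGen.b * FreeGroup.of PGen.a *
     (FreeGroup.of PGen.c)⁻¹,
   FreeGroup.of PGen.t * FreeGroup.of PGen.a * FreeGroup.of PGen.t *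
     FreeGroup.of PGen.b * (FreeGroup.of PGen.t)⁻¹ * FreeGroup.of PGen.c}

/-- The group `P = ⟨a, b, c, t ∣ b² = 1, c² = 1, a⁻¹ba = c, tatbt⁻¹c = 1⟩`. -/
abbrev PGroup : Type := PresentedGroup PRels

/-- The images of the generators in `P`. -/
def pOf (x : PGen) : PGroup := PresentedGroup.of x

/-- The Euclidean plane. -/
abbrev EPlane : Type := EuclideanSpace ℝ (Fin 2)

/-- A line in the Euclidean plane: a nonempty affine subspace with one-dimensional
direction. -/
def IsLine (ℓ : AffineSubspace ℝ EPlane) : Prop :=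
  (ℓ : Set EPlane).Nonempty ∧ Module.finrank ℝ ℓ.direction = 1

/-- Reflection across an affine subspace, as an element of the isometry group of
the plane. -/
noncomputable def reflIso (ℓ : AffineSubspace ℝ EPlane) (hn : Nonempty ℓ)
    (ho : Submodule.HasOrthogonalProjection ℓ.direction) : EPlane ≃ᵢ EPlane :=
  haveI := hn
  haveI := ho
  (EuclideanGeometry.reflection ℓ).toIsometryEquiv

/-! ### Auxiliary constructions -/

noncomputable def lineOf (u : EPlane) : AffineSubspace ℝ EPlane := (ℝ ∙ u).toAffineSubspace

instance lineOf_nonempty (u : EPlane) : Nonempty (lineOf u) :=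
  ⟨⟨0, Submodule.mem_toAffineSubspace.2 (Submodule.zero_mem _)⟩⟩

lemma lineOf_direction (u : EPlane) : (lineOf u).direction = ℝ ∙ u :=
  Submodule.toAffineSubspace_direction _

instance lineOf_hop (u : EPlane) : Submodule.HasOrthogonalProjection (lineOf u).direction := by
  rw [lineOf_direction]; infer_instance

lemma eg_proj (u p : EPlane) :
    (EuclideanGeometry.orthogonalProjection (lineOf u) p : EPlane)
      = (ℝ ∙ u).starProjection p := by
  symm
  rw [← Set.mem_singleton_iff, ← EuclideanGeometry.inter_eq_singleton_orthogonalProjection p]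
  constructor
  · exact Submodule.mem_toAffineSubspace.2 ((ℝ ∙ u).orthogonalProjectionOnto p).2
  · rw [AffineSubspace.mem_coe, AffineSubspace.mem_mk', lineOf_direction,
      vsub_eq_sub]
    rw [show ((ℝ ∙ u).starProjection p : EPlane) - p
        = -(p - (ℝ ∙ u).starProjection p) by abel]
    exact Submodule.neg_mem _ (Submodule.sub_starProjection_mem_orthogonal p)

noncomputable def Rf (u : EPlane) : EPlane ≃ᵢ EPlane :=
  reflIso (lineOf u) inferInstance inferInstance

lemma Rf_apply (u : EPlane) (hu : ‖u‖ = 1) (p : EPlane) :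
    Rf u p = (2 * (u 0 * p 0 + u 1 * p 1)) • u - p := by
  have h1 : Rf u p = EuclideanGeometry.reflection (lineOf u) p := rfl
  rw [h1, EuclideanGeometry.reflection_apply', eg_proj, Submodule.starProjection_singleton,
    vsub_eq_sub, vadd_eq_add, hu]
  have : (inner ℝ u p : ℝ) = u 0 * p 0 + u 1 * p 1 := by
    simp [PiLp.inner_apply, RCLike.inner_apply, Fin.sum_univ_two, mul_comm]
  rw [this]
  push_cast
  module

lemma Rf_apply_coord (u : EPlane) (hu : ‖u‖ = 1) (p : EPlane) (i : Fin 2) :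
    Rf u p i = (2 * (u 0 * p 0 + u 1 * p 1)) * u i - p i := by
  rw [Rf_apply u hu p]; simp [PiLp.smul_apply, PiLp.sub_apply]

noncomputable def u1 : EPlane := !₂[1, 0]
noncomputable def u2 : EPlane := !₂[1/2, Real.sqrt 3 / 2]
noncomputable def u3 : EPlane := !₂[-(1/2), Real.sqrt 3 / 2]

lemma s3 : Real.sqrt 3 * Real.sqrt 3 = 3 := Real.mul_self_sqrt (by norm_num)

lemma norm_u1 : ‖u1‖ = 1 := by
  simp only [EuclideanSpace.norm_eq, Fin.sum_univ_two, Real.norm_eq_abs, sq_abs, u1,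
    Matrix.cons_val_zero, Matrix.cons_val_one, Matrix.head_cons, PiLp.toLp_apply]
  norm_num

lemma norm_u2 : ‖u2‖ = 1 := by
  simp only [EuclideanSpace.norm_eq, Fin.sum_univ_two, Real.norm_eq_abs, sq_abs, u2,
    Matrix.cons_val_zero, Matrix.cons_val_one, Matrix.head_cons, PiLp.toLp_apply]
  rw [Real.sqrt_eq_one]
  linear_combination (1/4 : ℝ) * s3

lemma norm_u3 : ‖u3‖ = 1 := by
  simp only [EuclideanSpace.norm_eq, Fin.sum_univ_two, Real.norm_eq_abs, sq_abs, u3,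
    Matrix.cons_val_zero, Matrix.cons_val_one, Matrix.head_cons, PiLp.toLp_apply]
  rw [Real.sqrt_eq_one]
  linear_combination (1/4 : ℝ) * s3

lemma ep_ext {p q : EPlane} (h0 : p 0 = q 0) (h1 : p 1 = q 1) : p = q := by
  ext i; fin_cases i <;> assumption

lemma A0 (p : EPlane) : Rf u1 p 0 = p 0 := by
  rw [Rf_apply_coord u1 norm_u1]
  simp only [u1, Matrix.cons_val_zero, Matrix.cons_val_one, Matrix.head_cons, PiLp.toLp_apply]; ring

lemma A1 (p : EPlane) : Rf u1 p 1 = -(p 1) := by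
  rw [Rf_apply_coord u1 norm_u1]
  simp only [u1, Matrix.cons_val_zero, Matrix.cons_val_one, Matrix.head_cons, PiLp.toLp_apply]; ring

lemma T0 (p : EPlane) : Rf u2 p 0 = (Real.sqrt 3 * p 1 - p 0) / 2 := by
  rw [Rf_apply_coord u2 norm_u2]
  simp only [u2, Matrix.cons_val_zero, Matrix.cons_val_one, Matrix.head_cons, PiLp.toLp_apply]; ring

lemma T1 (p : EPlane) : Rf u2 p 1 = (Real.sqrt 3 * p 0 + p 1) / 2 := by
  rw [Rf_apply_coord u2 norm_u2]
  simp only [u2, Matrix.cons_val_zero, Matrix.cons_val_one, Matrix.head_cons, PiLp.toLp_apply]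
  linear_combination (p 1 / 2) * s3

lemma U0 (p : EPlane) : Rf u3 p 0 = -(p 0 + Real.sqrt 3 * p 1) / 2 := by
  rw [Rf_apply_coord u3 norm_u3]
  simp only [u3, Matrix.cons_val_zero, Matrix.cons_val_one, Matrix.head_cons, PiLp.toLp_apply]; ring

lemma U1 (p : EPlane) : Rf u3 p 1 = (-(Real.sqrt 3 * p 0) + p 1) / 2 := by
  rw [Rf_apply_coord u3 norm_u3]
  simp only [u3, Matrix.cons_val_zero, Matrix.cons_val_one, Matrix.head_cons, PiLp.toLp_apply]
  linear_combination (p 1 / 2) * s3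

lemma hA2 : Rf u1 * Rf u1 = 1 := by
  refine IsometryEquiv.ext fun p => ep_ext ?_ ?_ <;>
    simp [IsometryEquiv.mul_apply, A0, A1]

lemma hT2 : Rf u2 * Rf u2 = 1 := by
  refine IsometryEquiv.ext fun p => ep_ext ?_ ?_ <;>
    simp only [IsometryEquiv.mul_apply, T0, T1, IsometryEquiv.coe_one, id_eq]
  · linear_combination (p 0 / 4) * s3
  · linear_combination (p 1 / 4) * s3

lemma hTA3 : (Rf u2 * Rf u1) ^ 3 = 1 := by
  rw [pow_succ, pow_two]
  refine IsometryEquiv.ext fun p => ep_ext ?_ ?_ <;>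
    simp only [IsometryEquiv.mul_apply, A0, A1, T0, T1, IsometryEquiv.coe_one, id_eq]
  · linear_combination ((3 * p 0 + Real.sqrt 3 * p 1) / 8) * s3
  · linear_combination ((3 * p 1 - Real.sqrt 3 * p 0) / 8) * s3

lemma hTAT : Rf u2 * Rf u1 * Rf u2 = Rf u3 := by
  refine IsometryEquiv.ext fun p => ep_ext ?_ ?_ <;>
    simp only [IsometryEquiv.mul_apply, A0, A1, T0, T1, U0, U1]
  · linear_combination (-(p 0) / 4) * s3
  · linear_combination (p 1 / 4) * s3

lemma hAinv : (Rf u1)⁻¹ = Rf u1 := inv_eq_of_mul_eq_one_left hA2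
lemma hTinv : (Rf u2)⁻¹ = Rf u2 := inv_eq_of_mul_eq_one_left hT2

/-- The assignment of generators. -/
noncomputable def fGen : PGen → (EPlane ≃ᵢ EPlane)
  | PGen.a => Rf u1
  | PGen.b => Rf u1
  | PGen.c => Rf u1
  | PGen.t => Rf u2

lemma rel_check : ∀ r ∈ PRels, FreeGroup.lift fGen r = 1 := by
  have h3 := hTA3
  rw [pow_succ, pow_two] at h3
  rintro r (rfl | rfl | rfl | rfl) <;>
    simp only [map_mul, map_inv, map_pow, FreeGroup.lift_apply_of, fGen]
  · rw [pow_two]; exact hA2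
  · rw [pow_two]; exact hA2
  · group
  · rw [hTinv]
    calc Rf u2 * Rf u1 * Rf u2 * Rf u1 * Rf u2 * Rf u1
        = Rf u2 * Rf u1 * (Rf u2 * Rf u1) * (Rf u2 * Rf u1) := by
          simp only [mul_assoc]
      _ = 1 := h3

/-- The homomorphism `P →* Isom(ℝ²)`. -/
noncomputable def rho : PGroup →* (EPlane ≃ᵢ EPlane) := PresentedGroup.toGroup rel_check

lemma rho_of (x : PGen) : rho (pOf x) = fGen x := PresentedGroup.toGroup.of rel_check

lemma u1_ne_zero : u1 ≠ 0 := by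
  intro h
  have := congrArg (· 0) h
  simp [u1] at this

lemma u2_ne_zero : u2 ≠ 0 := by
  intro h
  have := congrArg (· 0) h
  simp [u2] at this

lemma u3_ne_zero : u3 ≠ 0 := by
  intro h
  have := congrArg (· 0) h
  simp [u3] at this

lemma isLine_lineOf {u : EPlane} (hu : u ≠ 0) : IsLine (lineOf u) := by
  refine ⟨⟨0, Submodule.mem_toAffineSubspace.2 (Submodule.zero_mem _)⟩, ?_⟩
  rw [lineOf_direction]
  exact finrank_span_singleton hu

lemma hAT_ne : Rf u1 * Rf u2 ≠ 1 := by
  intro h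
  have h0 : (Rf u1 * Rf u2) u1 0 = u1 0 := by rw [h]; rfl
  rw [IsometryEquiv.mul_apply, A0, T0] at h0
  simp only [u1, Matrix.cons_val_zero, Matrix.cons_val_one, Matrix.head_cons, PiLp.toLp_apply] at h0
  rw [mul_zero] at h0
  norm_num at h0

lemma hAT3 : (Rf u1 * Rf u2) ^ 3 = 1 := by
  have hinv : Rf u1 * Rf u2 = (Rf u2 * Rf u1)⁻¹ := by
    rw [mul_inv_rev, hAinv, hTinv]
  rw [hinv, inv_pow, hTA3, inv_one]

lemma hU_ne : Rf u3 ≠ 1 := by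
  intro h
  have h0 : Rf u3 u1 0 = u1 0 := by rw [h]; rfl
  rw [U0] at h0
  simp only [u1, Matrix.cons_val_zero, Matrix.cons_val_one, Matrix.head_cons, PiLp.toLp_apply] at h0
  rw [mul_zero] at h0
  norm_num at h0

theorem presented_group_elements_nontrivial :
    (pOf PGen.t * pOf PGen.b * (pOf PGen.t)⁻¹ ≠ 1) ∧
    ((pOf PGen.a)⁻¹ * (pOf PGen.t)⁻¹ ≠ 1) ∧
    ∃ (ρ : PGroup →* (EPlane ≃ᵢ EPlane)) (ℓ₁ ℓ₂ : AffineSubspace ℝ EPlane)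
      (hn₁ : Nonempty ℓ₁) (ho₁ : Submodule.HasOrthogonalProjection ℓ₁.direction)
      (hn₂ : Nonempty ℓ₂) (ho₂ : Submodule.HasOrthogonalProjection ℓ₂.direction),
      IsLine ℓ₁ ∧ IsLine ℓ₂ ∧
      -- `ℓ₁` and `ℓ₂` meet
      (∃ p : EPlane, p ∈ ℓ₁ ∧ p ∈ ℓ₂) ∧
      -- at angle `π/3`
      (∃ v₁ v₂ : EPlane, v₁ ∈ ℓ₁.direction ∧ v₂ ∈ ℓ₂.direction ∧ v₁ ≠ 0 ∧ v₂ ≠ 0 ∧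
        InnerProductGeometry.angle v₁ v₂ = Real.pi / 3) ∧
      ρ (pOf PGen.a) = reflIso ℓ₁ hn₁ ho₁ ∧
      ρ (pOf PGen.b) = reflIso ℓ₁ hn₁ ho₁ ∧
      ρ (pOf PGen.c) = reflIso ℓ₁ hn₁ ho₁ ∧
      ρ (pOf PGen.t) = reflIso ℓ₂ hn₂ ho₂ ∧
      -- `a⁻¹ t⁻¹` maps to a rotation of order 3
      orderOf (ρ ((pOf PGen.a)⁻¹ * (pOf PGen.t)⁻¹)) = 3 ∧
      (∃ p : EPlane, ρ ((pOf PGen.a)⁻¹ * (pOf PGen.t)⁻¹) p = p) ∧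
      -- `t b t⁻¹` maps to a reflection
      (∃ (ℓ₃ : AffineSubspace ℝ EPlane) (hn₃ : Nonempty ℓ₃)
          (ho₃ : Submodule.HasOrthogonalProjection ℓ₃.direction),
          IsLine ℓ₃ ∧ ρ (pOf PGen.t * pOf PGen.b * (pOf PGen.t)⁻¹) = reflIso ℓ₃ hn₃ ho₃) := by
  have hrho_tbt : rho (pOf PGen.t * pOf PGen.b * (pOf PGen.t)⁻¹) = Rf u3 := by
    rw [map_mul, map_mul, map_inv, rho_of, rho_of]
    show Rf u2 * Rf u1 * (Rf u2)⁻¹ = Rf u3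
    rw [hTinv]; exact hTAT
  have hrho_at : rho ((pOf PGen.a)⁻¹ * (pOf PGen.t)⁻¹) = Rf u1 * Rf u2 := by
    rw [map_mul, map_inv, map_inv, rho_of, rho_of]
    show (Rf u1)⁻¹ * (Rf u2)⁻¹ = Rf u1 * Rf u2
    rw [hAinv, hTinv]
  refine ⟨?_, ?_, rho, lineOf u1, lineOf u2, inferInstance, inferInstance, inferInstance,
    inferInstance, isLine_lineOf u1_ne_zero, isLine_lineOf u2_ne_zero,
    ⟨0, Submodule.mem_toAffineSubspace.2 (Submodule.zero_mem _),
      Submodule.mem_toAffineSubspace.2 (Submodule.zero_mem _)⟩, ?_, ?_, ?_, ?_, ?_, ?_, ?_, ?_⟩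
  · intro h
    apply hU_ne
    rw [← hrho_tbt, h, map_one]
  · intro h
    apply hAT_ne
    rw [← hrho_at, h, map_one]
  · -- angle
    refine ⟨u1, u2, ?_, ?_, u1_ne_zero, u2_ne_zero, ?_⟩
    · rw [lineOf_direction]; exact Submodule.mem_span_singleton_self u1
    · rw [lineOf_direction]; exact Submodule.mem_span_singleton_self u2
    · unfold InnerProductGeometry.angle
      have hi : (inner ℝ u1 u2 : ℝ) = 1/2 := by
        simp only [PiLp.inner_apply, RCLike.inner_apply, Fin.sum_univ_two, u1, u2,
          Matrix.cons_val_zero, Matrix.cons_val_one, Matrix.head_cons, conj_trivial, PiLp.toLp_apply]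
        ring
      rw [hi, norm_u1, norm_u2, show (1/2 : ℝ)/(1*1) = Real.cos (Real.pi / 3) by
        rw [Real.cos_pi_div_three]; norm_num]
      exact Real.arccos_cos (by positivity) (by linarith [Real.pi_pos])
  · exact rho_of PGen.a
  · exact rho_of PGen.b
  · exact rho_of PGen.c
  · exact rho_of PGen.t
  · rw [hrho_at]
    haveI : Fact (Nat.Prime 3) := ⟨by norm_num⟩
    exact orderOf_eq_prime hAT3 hAT_ne
  · refine ⟨0, ?_⟩
    rw [hrho_at, IsometryEquiv.mul_apply]
    refine ep_ext ?_ ?_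
    · rw [A0, T0]; norm_num
    · rw [A1, T1]; norm_num
  · exact ⟨lineOf u3, inferInstance, inferInstance, isLine_lineOf u3_ne_zero, hrho_tbt⟩
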